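/- Let p be a prime, l ≥ 1, n ≥ 1, j ≥ 0, and let α' = n·j + 1 + k + [p = 2 and k > 0], where k is the p-adic valuation of n. For each residue r with 0 < r < p, the map x' ↦ ⌊(p^j·(p·x' + r))^n / p^{α'}⌋ mod p^l is a bijection of {0, ..., p^l − 1}. -/

import Mathlib

private lemma epc_emult_n {p q k : ℕ} (hp : p.Prime) (hq : ¬ p ∣ q) :
    emultiplicity p (q * p ^ k) = (k : ℕ∞) := by
  rw [emultiplicity_mul hp.prime, emultiplicity_pow_self_of_prime hp.prime,
      emultiplicity_eq_zero.2 hq, zero_add]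

private lemma epc_not_dvd_u {p r : ℕ} (hr0 : 0 < r) (hrp : r < p) (x : ℤ) :
    ¬ (p:ℤ) ∣ ((p:ℤ) * x + r) := by
  intro h
  have h2 : (p:ℤ) ∣ (r:ℤ) := (dvd_add_right ⟨x, rfl⟩).mp h
  rw [Int.natCast_dvd_natCast] at h2
  exact absurd (Nat.le_of_dvd hr0 h2) (not_le.mpr hrp)

private lemma epc_lower (p : ℕ) (hp : p.Prime)
    (n q k : ℕ) (hnqk : n = q * p ^ k) (hq : ¬ p ∣ q)
    (r : ℕ) (hr0 : 0 < r) (hrp : r < p) (X Y : ℤ) :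
    (p:ℤ) ^ (1 + k + (if p = 2 ∧ 0 < k then 1 else 0)) ∣
      ((p:ℤ) * X + r) ^ n - ((p:ℤ) * Y + r) ^ n := by
  set u : ℤ := (p:ℤ) * X + r with hu
  set w : ℤ := (p:ℤ) * Y + r with hw
  have hpi : Prime (p:ℤ) := Nat.prime_iff_prime_int.mp hp
  have huw : u - w = (p:ℤ) * (X - Y) := by ring
  have hxy : (p:ℤ) ∣ u - w := ⟨X - Y, huw⟩
  have hxu : ¬ (p:ℤ) ∣ u := epc_not_dvd_u hr0 hrp X
  by_cases hp2 : p = 2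
  · subst hp2
    have hr1 : r = 1 := by omega
    subst hr1
    by_cases hk : 0 < k
    · -- p = 2, k > 0
      rw [if_pos ⟨rfl, hk⟩, pow_dvd_iff_le_emultiplicity]
      have hneven : Even n := by
        rw [hnqk]
        exact ((even_iff_two_dvd).mpr (dvd_pow_self 2 (by omega))).mul_left q
      have main := Int.two_pow_sub_pow (x := u) (y := w) (by exact_mod_cast hxy)
        (by exact_mod_cast hxu) hneven
      have hn2 : emultiplicity (2:ℤ) (n:ℤ) = (k : ℕ∞) := by
        rw [show ((2:ℤ)) = ((2:ℕ):ℤ) by norm_num, Int.natCast_emultiplicity, hnqk,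
          epc_emult_n hp hq]
      rw [hn2] at main
      have hsum : u + w = 2 * (X + Y + 1) := by rw [hu, hw]; push_cast; ring
      have hdiff : u - w = 2 * (X - Y) := by exact_mod_cast huw
      have h1p : ((1:ℕ) : ℕ∞) ≤ emultiplicity (2:ℤ) (u + w) := by
        rw [← pow_dvd_iff_le_emultiplicity, pow_one, hsum]; exact ⟨_, rfl⟩
      have h1m : ((1:ℕ) : ℕ∞) ≤ emultiplicity (2:ℤ) (u - w) := by
        rw [← pow_dvd_iff_le_emultiplicity, pow_one, hdiff]; exact ⟨_, rfl⟩
      have h3 : ((3:ℕ) : ℕ∞) ≤ emultiplicity (2:ℤ) (u + w) + emultiplicity (2:ℤ) (u - w) := by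
        rcases Int.even_or_odd (X - Y) with he | ho
        · have h2m : ((2:ℕ) : ℕ∞) ≤ emultiplicity (2:ℤ) (u - w) := by
            rw [← pow_dvd_iff_le_emultiplicity, hdiff]
            obtain ⟨c, hc⟩ := he
            exact ⟨c, by rw [hc]; ring⟩
          calc ((3:ℕ) : ℕ∞) = ((1:ℕ):ℕ∞) + ((2:ℕ):ℕ∞) := by norm_num
          _ ≤ _ := add_le_add h1p h2m
        · have h2p : ((2:ℕ) : ℕ∞) ≤ emultiplicity (2:ℤ) (u + w) := by
            rw [← pow_dvd_iff_le_emultiplicity, hsum]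
            obtain ⟨c, hc⟩ := ho
            exact ⟨c + Y + 1, by linear_combination 2 * hc⟩
          calc ((3:ℕ) : ℕ∞) = ((2:ℕ):ℕ∞) + ((1:ℕ):ℕ∞) := by norm_num
          _ ≤ _ := add_le_add h2p h1m
      have key : ((1 + k + 1 : ℕ) : ℕ∞) + 1 ≤ emultiplicity (2:ℤ) (u ^ n - w ^ n) + 1 := by
        rw [main]
        calc ((1 + k + 1 : ℕ) : ℕ∞) + 1 = ((3:ℕ):ℕ∞) + (k : ℕ∞) := by push_cast; ring
        _ ≤ (emultiplicity (2:ℤ) (u + w) + emultiplicity (2:ℤ) (u - w)) + (k:ℕ∞) :=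
            add_le_add h3 le_rfl
        _ = _ := by ring
      exact (WithTop.add_le_add_iff_right (by exact ENat.one_ne_top)).mp key
    · -- p = 2, k = 0 : n odd
      rw [if_neg (by simpa using hk)]
      have hk0 : k = 0 := by omega
      have h2 : (2:ℤ) ∣ u - w := by exact_mod_cast hxy
      calc ((2:ℕ):ℤ) ^ (1 + k + 0) = (2:ℤ) ^ 1 := by rw [hk0]; norm_num
      _ ∣ u - w := by rw [pow_one]; exact h2
      _ ∣ u ^ n - w ^ n := sub_dvd_pow_sub_pow u w n
  · -- p odd
    have hodd : Odd p := hp.odd_of_ne_two hp2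
    rw [if_neg (by simp [hp2]), pow_dvd_iff_le_emultiplicity]
    rw [Int.emultiplicity_pow_sub_pow hp hodd hxy hxu n, hnqk, epc_emult_n hp hq]
    have h1m : ((1:ℕ) : ℕ∞) ≤ emultiplicity (p:ℤ) (u - w) := by
      rw [← pow_dvd_iff_le_emultiplicity, pow_one]; exact hxy
    calc ((1 + k + 0 : ℕ) : ℕ∞) = ((1:ℕ):ℕ∞) + (k:ℕ∞) := by push_cast; ring
    _ ≤ _ := add_le_add h1m le_rfl

private lemma epc_emult_n' {p q k : ℕ} (hp : p.Prime) (hq : ¬ p ∣ q) :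
    emultiplicity p (q * p ^ k) = (k : ℕ∞) := by
  rw [emultiplicity_mul hp.prime, emultiplicity_pow_self_of_prime hp.prime,
      emultiplicity_eq_zero.2 hq, zero_add]

private lemma epc_not_dvd_u' {p r : ℕ} (hr0 : 0 < r) (hrp : r < p) (x : ℤ) :
    ¬ (p:ℤ) ∣ ((p:ℤ) * x + r) := by
  intro h
  have h2 : (p:ℤ) ∣ (r:ℤ) := (dvd_add_right ⟨x, rfl⟩).mp h
  rw [Int.natCast_dvd_natCast] at h2
  exact absurd (Nat.le_of_dvd hr0 h2) (not_le.mpr hrp)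

private lemma epc_upper (p : ℕ) (hp : p.Prime) (l : ℕ) (hl : 1 ≤ l)
    (n q k : ℕ) (hnqk : n = q * p ^ k) (hq : ¬ p ∣ q)
    (r : ℕ) (hr0 : 0 < r) (hrp : r < p)
    (x y : ℕ) (hx : x < p ^ l) (hy : y < p ^ l) (hne : x ≠ y) :
    ¬ (p:ℤ) ^ (1 + k + (if p = 2 ∧ 0 < k then 1 else 0) + l) ∣
      ((p:ℤ) * x + r) ^ n - ((p:ℤ) * y + r) ^ n := by
  obtain ⟨X, hX⟩ : ∃ X : ℤ, X = (x : ℤ) := ⟨_, rfl⟩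
  obtain ⟨Y, hY⟩ : ∃ Y : ℤ, Y = (y : ℤ) := ⟨_, rfl⟩
  obtain ⟨u, hu⟩ : ∃ u : ℤ, u = (p:ℤ) * X + r := ⟨_, rfl⟩
  obtain ⟨w, hw⟩ : ∃ w : ℤ, w = (p:ℤ) * Y + r := ⟨_, rfl⟩
  rw [← hX, ← hY, ← hu, ← hw, ← emultiplicity_lt_iff_not_dvd]
  have hpi : Prime (p:ℤ) := Nat.prime_iff_prime_int.mp hp
  have hemp : emultiplicity (p:ℤ) (p:ℤ) = ((1:ℕ) : ℕ∞) := by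
    simpa using emultiplicity_pow_self_of_prime hpi 1
  have huw : u - w = (p:ℤ) * (X - Y) := by rw [hu, hw]; ring
  have hxy : (p:ℤ) ∣ u - w := ⟨X - Y, huw⟩
  have hxu : ¬ (p:ℤ) ∣ u := hu ▸ epc_not_dvd_u' hr0 hrp X
  have hXYne : X - Y ≠ 0 := by
    rw [hX, hY, sub_ne_zero]
    exact_mod_cast hne
  have hxl : X < (p:ℤ) ^ l := by rw [hX]; exact_mod_cast hx
  have hyl : Y < (p:ℤ) ^ l := by rw [hY]; exact_mod_cast hy
  have hx0 : 0 ≤ X := hX ▸ Int.natCast_nonneg x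
  have hy0 : 0 ≤ Y := hY ▸ Int.natCast_nonneg y
  have habs : |X - Y| < (p:ℤ) ^ l := by
    rw [abs_sub_lt_iff]
    omega
  have hnd : ¬ (p:ℤ) ^ l ∣ (X - Y) := fun h => hXYne (Int.eq_zero_of_abs_lt_dvd h habs)
  have helt : emultiplicity (p:ℤ) (X - Y) < (l : ℕ∞) := emultiplicity_lt_iff_not_dvd.2 hnd
  have hene : emultiplicity (p:ℤ) (X - Y) ≠ ⊤ := (helt.trans (WithTop.coe_lt_top l)).ne
  lift emultiplicity (p:ℤ) (X - Y) to ℕ using hene with e he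
  have helt' : e < l := by exact_mod_cast helt
  have hdiffE : emultiplicity (p:ℤ) (u - w) = ((1 + e : ℕ) : ℕ∞) := by
    rw [huw, emultiplicity_mul hpi, hemp, ← he]
    push_cast
    ring
  by_cases hp2 : p = 2
  · subst hp2
    have hr1 : r = 1 := by omega
    subst hr1
    by_cases hk : 0 < k
    · -- p = 2, k > 0
      rw [if_pos ⟨rfl, hk⟩]
      have hneven : Even n := by
        rw [hnqk]
        exact ((even_iff_two_dvd).mpr (dvd_pow_self 2 (by omega))).mul_left q
      have main := Int.two_pow_sub_pow (x := u) (y := w) (by exact_mod_cast hxy)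
        (by exact_mod_cast hxu) hneven
      rw [show (2:ℤ) = ((2:ℕ):ℤ) by norm_num] at main
      have hn2 : emultiplicity (((2:ℕ):ℤ)) ((n:ℕ):ℤ) = (k : ℕ∞) := by
        rw [Int.natCast_emultiplicity, hnqk, epc_emult_n' hp hq]
      rw [hn2] at main
      have hsum : u + w = ((2:ℕ):ℤ) * (X + Y + 1) := by rw [hu, hw]; push_cast; ring
      have hsne : X + Y + 1 ≠ 0 := by omega
      have hsabs : |X + Y + 1| < ((2:ℕ):ℤ) ^ (l + 1) := by
        rw [abs_lt]
        have h3 : (((2:ℕ):ℤ))^(l+1) = 2^l + 2^l := by push_cast; ring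
        push_cast at h3 hxl hyl ⊢
        omega
      have hnd2 : ¬ ((2:ℕ):ℤ) ^ (l + 1) ∣ (X + Y + 1) :=
        fun h => hsne (Int.eq_zero_of_abs_lt_dvd h hsabs)
      have hplt : emultiplicity (((2:ℕ):ℤ)) (X + Y + 1) < ((l + 1 : ℕ) : ℕ∞) := by
        exact_mod_cast emultiplicity_lt_iff_not_dvd.2 hnd2
      have hpne : emultiplicity (((2:ℕ):ℤ)) (X + Y + 1) ≠ ⊤ :=
        (hplt.trans (WithTop.coe_lt_top (l+1))).ne
      lift emultiplicity (((2:ℕ):ℤ)) (X + Y + 1) to ℕ using hpne with f hf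
      have hflt : f < l + 1 := by exact_mod_cast hplt
      have hsumE : emultiplicity (((2:ℕ):ℤ)) (u + w) = ((1 + f : ℕ) : ℕ∞) := by
        rw [hsum, emultiplicity_mul hpi, hemp, ← hf]
        push_cast
        ring
      rw [hsumE, hdiffE] at main
      have hef : e = 0 ∨ f = 0 := by
        rcases Int.even_or_odd (X - Y) with hev | hod
        · right
          have hnd3 : ¬ ((2:ℕ):ℤ) ∣ (X + Y + 1) := by
            rcases hev with ⟨c, hc⟩
            rintro ⟨d, hd⟩
            push_cast at hd
            omega
          have h0 := emultiplicity_eq_zero.2 hnd3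
          rw [← hf] at h0
          exact_mod_cast h0
        · left
          have hnd3 : ¬ ((2:ℕ):ℤ) ∣ (X - Y) := by
            rcases hod with ⟨c, hc⟩
            rintro ⟨d, hd⟩
            push_cast at hd
            omega
          have h0 := emultiplicity_eq_zero.2 hnd3
          rw [← he] at h0
          exact_mod_cast h0
      have hEne : emultiplicity (((2:ℕ):ℤ)) (u ^ n - w ^ n) ≠ ⊤ := by
        intro h
        rw [h, top_add] at main
        have hco : ((1+f:ℕ):ℕ∞) + ((1+e:ℕ):ℕ∞) + (k:ℕ∞) = (((1+f)+(1+e)+k : ℕ) : ℕ∞) := by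
          push_cast; ring
        rw [hco] at main
        exact WithTop.coe_ne_top main.symm
      lift emultiplicity (((2:ℕ):ℤ)) (u ^ n - w ^ n) to ℕ using hEne with E hE
      have main' : E + 1 = (1 + f) + (1 + e) + k := by exact_mod_cast main
      have hfin : E < 1 + k + 1 + l := by omega
      exact_mod_cast hfin
    · -- p = 2, k = 0
      rw [if_neg (by simpa using hk)]
      have hk0 : k = 0 := by omega
      have hqn : n = q := by rw [hnqk, hk0]; ring
      have hu2 : ((u : ℤ) : ZMod 2) = 1 := by
        rw [hu]
        push_cast
        rw [show ((2:ZMod 2)) = 0 by decide]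
        ring
      have hw2 : ((w : ℤ) : ZMod 2) = 1 := by
        rw [hw]
        push_cast
        rw [show ((2:ZMod 2)) = 0 by decide]
        ring
      have hod : ¬ ((2:ℕ):ℤ) ∣ (∑ i ∈ Finset.range n, u ^ i * w ^ (n - 1 - i)) := by
        intro hdvd
        have hz : ((∑ i ∈ Finset.range n, u ^ i * w ^ (n - 1 - i) : ℤ) : ZMod 2) = 0 := by
          rw [ZMod.intCast_zmod_eq_zero_iff_dvd]
          exact_mod_cast hdvd
        have hcast : ((∑ i ∈ Finset.range n, u ^ i * w ^ (n - 1 - i) : ℤ) : ZMod 2)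
            = (n : ZMod 2) := by
          push_cast
          simp [hu2, hw2]
        rw [hcast, ZMod.natCast_eq_zero_iff] at hz
        rw [hqn] at hz
        exact hq hz
      have hgeo : u ^ n - w ^ n
          = (∑ i ∈ Finset.range n, u ^ i * w ^ (n - 1 - i)) * (u - w) :=
        (geom_sum₂_mul u w n).symm
      rw [hgeo, emultiplicity_mul hpi, emultiplicity_eq_zero.2 hod, hdiffE, zero_add]
      have hfin : 1 + e < 1 + k + 0 + l := by omega
      exact_mod_cast hfin
  · -- p odd
    have hodd : Odd p := hp.odd_of_ne_two hp2
    rw [if_neg (by simp [hp2]),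
      Int.emultiplicity_pow_sub_pow hp hodd hxy hxu n, hnqk, epc_emult_n' hp hq, hdiffE]
    have hfin : 1 + e + k < 1 + k + 0 + l := by omega
    exact_mod_cast hfin

private lemma epc_step (p α l A B dA dB c : ℕ) (hA : A = p ^ α * dA + c)
    (hB : B = p ^ α * dB + c) (hd : dA % p ^ l = dB % p ^ l) :
    (p:ℤ) ^ (α + l) ∣ (A:ℤ) - (B:ℤ) := by
  have hA' : (A:ℤ) = (p:ℤ)^α * dA + c := by rw [hA]; push_cast; ring
  have hB' : (B:ℤ) = (p:ℤ)^α * dB + c := by rw [hB]; push_cast; ring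
  have hAB : (A:ℤ) - B = (p:ℤ)^α * ((dA:ℤ) - dB) := by rw [hA', hB']; ring
  rw [hAB, pow_add]
  refine mul_dvd_mul_left _ ?_
  have hdvd := (Nat.modEq_iff_dvd (n := p ^ l) (a := dA) (b := dB)).mp hd
  push_cast at hdvd ⊢
  exact dvd_sub_comm.mp hdvd

theorem extended_power_coding_theorem (p : ℕ) (hp : p.Prime) (l : ℕ) (hl : 1 ≤ l)
    (n q k : ℕ) (hn : 0 < n) (hnqk : n = q * p ^ k) (hq : ¬ p ∣ q) (j : ℕ)
    (r : ℕ) (hr0 : 0 < r) (hrp : r < p) :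
    Set.BijOn
      (fun x' : ℕ =>
        ((p ^ j * (p * x' + r)) ^ n /
          p ^ (n * j + 1 + k + if p = 2 ∧ 0 < k then 1 else 0)) % p ^ l)
      (Set.Iio (p ^ l)) (Set.Iio (p ^ l)) := by
  have hppos : 0 < p := hp.pos
  have hfun : ∀ x : ℕ, (p ^ j * (p * x + r)) ^ n /
      p ^ (n * j + 1 + k + if p = 2 ∧ 0 < k then 1 else 0)
      = (p * x + r) ^ n / p ^ (1 + k + if p = 2 ∧ 0 < k then 1 else 0) := by
    intro x
    rw [mul_pow, ← pow_mul,
      show n * j + 1 + k + (if p = 2 ∧ 0 < k then 1 else 0)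
        = j * n + (1 + k + if p = 2 ∧ 0 < k then 1 else 0) by ring,
      pow_add, Nat.mul_div_mul_left _ _ (pow_pos hppos _)]
  have hmod : ∀ x : ℕ, (p * x + r) ^ n % p ^ (1 + k + if p = 2 ∧ 0 < k then 1 else 0)
      = r ^ n % p ^ (1 + k + if p = 2 ∧ 0 < k then 1 else 0) := by
    intro x
    have h := epc_lower p hp n q k hnqk hq r hr0 hrp (x:ℤ) 0
    simp only [mul_zero, zero_add] at h
    refine (Nat.modEq_iff_dvd (n := p ^ (1 + k + if p = 2 ∧ 0 < k then 1 else 0))).mpr ?_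
    push_cast
    exact dvd_sub_comm.mp h
  have hmaps : Set.MapsTo
      (fun x' : ℕ =>
        ((p ^ j * (p * x' + r)) ^ n /
          p ^ (n * j + 1 + k + if p = 2 ∧ 0 < k then 1 else 0)) % p ^ l)
      (Set.Iio (p ^ l)) (Set.Iio (p ^ l)) :=
    fun x _ => Set.mem_Iio.mpr (Nat.mod_lt _ (pow_pos hppos l))
  refine ((Set.finite_Iio _).injOn_iff_bijOn_of_mapsTo hmaps).mp ?_
  intro x hx y hy hEq
  by_contra hne
  simp only [hfun] at hEq
  have key : (p:ℤ) ^ ((1 + k + if p = 2 ∧ 0 < k then 1 else 0) + l) ∣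
      (((p * x + r) ^ n : ℕ) : ℤ) - (((p * y + r) ^ n : ℕ) : ℤ) := by
    refine epc_step p _ l _ _ _ _ (r ^ n % p ^ (1 + k + if p = 2 ∧ 0 < k then 1 else 0)) ?_ ?_ hEq
    · rw [← hmod x]; exact (Nat.div_add_mod _ _).symm
    · rw [← hmod y]; exact (Nat.div_add_mod _ _).symm
  have key' : (p:ℤ) ^ (1 + k + (if p = 2 ∧ 0 < k then 1 else 0) + l) ∣
      ((p:ℤ) * x + r) ^ n - ((p:ℤ) * y + r) ^ n := by
    push_cast at key
    convert key using 2 <;> ring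
  exact epc_upper p hp l hl n q k hnqk hq r hr0 hrp x y
    (Set.mem_Iio.mp hx) (Set.mem_Iio.mp hy) hne key'
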